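/- For the finite-volume Abelian sandpile model on V ⊂ Z^d, the addition operators a_{x,V} restricted to the set R_V of recurrent configurations are bijections of R_V, and they commute: a_{x,V} a_{y,V} = a_{y,V} a_{x,V} on R_V for all x, y ∈ V. -/

import Mathlib

/- The Abelian sandpile model on ℤ^d.  Sites are `Fin d → ℤ`; the toppling matrix is
`Δ_{xx} = 2d`, `Δ_{xy} = -1` for nearest neighbours, `0` otherwise.  Toppling in volume `V`
uses the matrix restricted to `V` (grains leaving `V` disappear).  `LegalSeq V η l η'`
says that `l` is a sequence of legal topplings in `V` taking `η` to `η'`. -/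

open scoped Classical

abbrev Site (d : ℕ) := Fin d → ℤ

def adjacent {d : ℕ} (x y : Site d) : Prop := (∑ i, |x i - y i|) = 1

noncomputable def lap (d : ℕ) (x y : Site d) : ℤ :=
  if x = y then 2 * d else if adjacent x y then -1 else 0

abbrev Config (d : ℕ) := Site d → ℤ

noncomputable def lapV {d : ℕ} (V : Finset (Site d)) (x y : Site d) : ℤ :=
  if x ∈ V ∧ y ∈ V then lap d x y else 0

noncomputable def topple {d : ℕ} (V : Finset (Site d)) (x : Site d) (η : Config d) :
    Config d := fun y => η y - lapV V x y

def Stable {d : ℕ} (V : Finset (Site d)) (η : Config d) : Prop := ∀ x ∈ V, η x ≤ 2 * d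

/-- `l` is a sequence of legal topplings in volume `V` carrying `η` to `η'`. -/
def LegalSeq {d : ℕ} (V : Finset (Site d)) : Config d → List (Site d) → Config d → Prop
  | η, [], η' => η' = η
  | η, x :: l, η' => x ∈ V ∧ (2 * d : ℤ) < η x ∧ LegalSeq V (topple V x η) l η'

noncomputable def addGrain {d : ℕ} (x : Site d) (η : Config d) : Config d :=
  fun y => if y = x then η y + 1 else η y


/-- `a` is a family of addition operators for the volume `V`: `a x η` is obtained from
`η + δ_x` by a stabilizing sequence of legal topplings in `V`. -/
def IsAdditionOp {d : ℕ} (V : Finset (Site d)) (a : Site d → Config d → Config d) : Prop :=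
  ∀ x ∈ V, ∀ η : Config d, Stable V η →
    ∃ l : List (Site d), LegalSeq V (addGrain x η) l (a x η) ∧ Stable V (a x η)

section AuxASM

variable {d : ℕ} {V : Finset (Site d)}

lemma lapV_nonpos {x y : Site d} (h : x ≠ y) : lapV V x y ≤ 0 := by
  unfold lapV lap
  rw [if_neg h]
  split_ifs <;> norm_num

lemma lapV_self {x : Site d} (hx : x ∈ V) : lapV V x x = 2 * d := by
  simp [lapV, lap, hx]

lemma topple_le {x y : Site d} (h : x ≠ y) (η : Config d) :
    η y ≤ topple V x η y := by
  have := lapV_nonpos (V := V) h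
  simp only [topple]
  linarith

lemma topple_self {x : Site d} (hx : x ∈ V) (η : Config d) :
    topple V x η x = η x - 2 * d := by
  simp [topple, lapV_self hx]

lemma topple_comm (x y : Site d) (η : Config d) :
    topple V x (topple V y η) = topple V y (topple V x η) := by
  funext z; simp only [topple]; ring

lemma le_addGrain (x : Site d) (η : Config d) (y : Site d) :
    η y ≤ addGrain x η y := by
  unfold addGrain; split <;> linarith

lemma addGrain_comm (x y : Site d) (η : Config d) :
    addGrain x (addGrain y η) = addGrain y (addGrain x η) := by
  funext z
  simp only [addGrain]
  split_ifs <;> rfl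

lemma topple_addGrain (w x : Site d) (η : Config d) :
    topple V w (addGrain x η) = addGrain x (topple V w η) := by
  funext z
  by_cases h : z = x <;> simp [topple, addGrain, h] <;> ring

lemma legalSeq_addGrain (x : Site d) {η η' : Config d} {l : List (Site d)}
    (h : LegalSeq V η l η') : LegalSeq V (addGrain x η) l (addGrain x η') := by
  induction l generalizing η with
  | nil => simp only [LegalSeq] at h ⊢; rw [h]
  | cons w t ih =>
    simp only [LegalSeq] at h ⊢
    obtain ⟨hwV, hgt, hrest⟩ := h
    refine ⟨hwV, lt_of_lt_of_le hgt (le_addGrain x η w), ?_⟩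
    rw [topple_addGrain]
    exact ih hrest

lemma legalSeq_append {η η1 η2 : Config d} {l1 l2 : List (Site d)}
    (h1 : LegalSeq V η l1 η1) (h2 : LegalSeq V η1 l2 η2) :
    LegalSeq V η (l1 ++ l2) η2 := by
  induction l1 generalizing η with
  | nil =>
    simp only [LegalSeq] at h1
    subst h1
    simpa using h2
  | cons w t ih =>
    simp only [LegalSeq] at h1 ⊢
    exact ⟨h1.1, h1.2.1, ih h1.2.2⟩

lemma mem_of_legalSeq_stable {η η' : Config d} {l : List (Site d)}
    (h : LegalSeq V η l η') (hs : Stable V η') {z : Site d}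
    (hz : z ∈ V) (hgt : (2 * d : ℤ) < η z) : z ∈ l := by
  induction l generalizing η with
  | nil =>
    simp only [LegalSeq] at h
    subst h
    exact absurd (hs z hz) (not_le.2 hgt)
  | cons w t ih =>
    simp only [LegalSeq] at h
    obtain ⟨hwV, hw, hrest⟩ := h
    by_cases hzw : w = z
    · exact hzw ▸ (List.mem_cons_self : w ∈ w :: t)
    · exact List.mem_cons_of_mem w
        (ih hrest (lt_of_lt_of_le hgt (topple_le hzw η)))

lemma legalSeq_erase {η η' : Config d} {l : List (Site d)} {z : Site d}
    (h : LegalSeq V η l η') (hzl : z ∈ l) (hzV : z ∈ V) (hgt : (2*d:ℤ) < η z) :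
    LegalSeq V (topple V z η) (l.erase z) η' := by
  induction l generalizing η with
  | nil => simp at hzl
  | cons w t ih =>
    simp only [LegalSeq] at h
    obtain ⟨hwV, hw, hrest⟩ := h
    by_cases hwz : w = z
    · subst hwz
      rw [List.erase_cons_head]
      exact hrest
    · have hzt : z ∈ t := by
        rcases List.mem_cons.1 hzl with h' | h'
        · exact absurd h'.symm hwz
        · exact h'
      rw [List.erase_cons_tail (by simpa using hwz)]
      simp only [LegalSeq]
      refine ⟨hwV, lt_of_lt_of_le hw (topple_le (fun h' => hwz h'.symm) η), ?_⟩
      rw [topple_comm]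
      exact ih (η := topple V w η) hrest hzt (lt_of_lt_of_le hgt (topple_le hwz η))

lemma abelian {η η1 η2 : Config d} {l l' : List (Site d)}
    (h1 : LegalSeq V η l η1) (hs1 : Stable V η1)
    (h2 : LegalSeq V η l' η2) (hs2 : Stable V η2) : η1 = η2 := by
  induction l generalizing η l' with
  | nil =>
    simp only [LegalSeq] at h1
    subst h1
    cases l' with
    | nil => simp only [LegalSeq] at h2; rw [h2]
    | cons w t =>
      simp only [LegalSeq] at h2
      exact absurd (hs1 w h2.1) (not_le.2 h2.2.1)
  | cons w t ih =>
    simp only [LegalSeq] at h1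
    obtain ⟨hwV, hw, hrest⟩ := h1
    exact ih hrest (legalSeq_erase h2 (mem_of_legalSeq_stable h2 hs2 hwV hw) hwV hw)

lemma commute_of_stable {a : Site d → Config d → Config d}
    (ha : IsAdditionOp V a) {x y : Site d} (hx : x ∈ V) (hy : y ∈ V)
    {η : Config d} (hη : Stable V η) : a x (a y η) = a y (a x η) := by
  obtain ⟨l1, hl1, hs1⟩ := ha y hy η hη
  obtain ⟨l2, hl2, hs2⟩ := ha x hx (a y η) hs1
  obtain ⟨l3, hl3, hs3⟩ := ha x hx η hη
  obtain ⟨l4, hl4, hs4⟩ := ha y hy (a x η) hs3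
  have H1 : LegalSeq V (addGrain x (addGrain y η)) (l1 ++ l2) (a x (a y η)) :=
    legalSeq_append (legalSeq_addGrain x hl1) hl2
  have H2 : LegalSeq V (addGrain x (addGrain y η)) (l3 ++ l4) (a y (a x η)) := by
    rw [addGrain_comm]
    exact legalSeq_append (legalSeq_addGrain y hl3) hl4
  exact abelian H1 hs2 H2 hs4

lemma pos_of_legalSeq {η η' : Config d} {l : List (Site d)}
    (h : LegalSeq V η l η') (hpos : ∀ z ∈ V, (1:ℤ) ≤ η z) :
    ∀ z ∈ V, (1:ℤ) ≤ η' z := by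
  induction l generalizing η with
  | nil => simp only [LegalSeq] at h; subst h; exact hpos
  | cons w t ih =>
    simp only [LegalSeq] at h
    obtain ⟨hwV, hw, hrest⟩ := h
    refine ih hrest ?_
    intro z hz
    by_cases hzw : z = w
    · subst hzw; rw [topple_self hwV]; linarith
    · exact le_trans (hpos z hz) (topple_le (fun h' => hzw h'.symm) η)

lemma iterate_comm {a : Site d → Config d → Config d}
    (ha : IsAdditionOp V a) {x w : Site d} (hx : x ∈ V) (hw : w ∈ V) :
    ∀ (n : ℕ) {η : Config d}, Stable V η →
      (a w)^[n] (a x η) = a x ((a w)^[n] η)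
  | 0, _, _ => rfl
  | n+1, η, hη => by
    rw [Function.iterate_succ_apply, Function.iterate_succ_apply,
        commute_of_stable ha hw hx hη,
        iterate_comm ha hx hw n ((ha w hw η hη).choose_spec.2)]

end AuxASM

/-- the addition operators `a_{x,V}` restricted to the set `R_V` of recurrent
configurations (stable configurations with heights in `{1,…,2d}` on `V` such that for every
`x ∈ V` some positive power of `a_{x,V}` fixes them) are bijections of `R_V`, and they
commute on `R_V`. -/
theorem addition_operators_bijective_and_commute
    {d : ℕ} (V : Finset (Site d)) (a : Site d → Config d → Config d)
    (ha : IsAdditionOp V a)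
    (R : Set (Config d))
    (hR : R = {η | (∀ z ∈ V, (1:ℤ) ≤ η z ∧ η z ≤ (2 * d : ℤ)) ∧
                   ∀ x ∈ V, ∃ n : ℕ, 1 ≤ n ∧ (a x)^[n] η = η})
    (x y : Site d) (hx : x ∈ V) (hy : y ∈ V) :
    Set.BijOn (a x) R R ∧ ∀ η ∈ R, a x (a y η) = a y (a x η) := by
  have hst : ∀ η ∈ R, Stable V η := by
    intro η hη
    rw [hR] at hη
    exact fun z hz => (hη.1 z hz).2
  have hmaps : ∀ x' ∈ V, ∀ η ∈ R, a x' η ∈ R := by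
    intro x' hx' η hη
    have hstη := hst η hη
    rw [hR] at hη ⊢
    obtain ⟨l, hl, hs⟩ := ha x' hx' η hstη
    constructor
    · intro z hz
      refine ⟨?_, hs z hz⟩
      exact pos_of_legalSeq hl
        (fun z hz => le_trans (hη.1 z hz).1 (le_addGrain x' η z)) z hz
    · intro w hw
      obtain ⟨n, hn1, hnfix⟩ := hη.2 w hw
      exact ⟨n, hn1, by rw [iterate_comm ha hx' hw n hstη, hnfix]⟩
  have hiter : ∀ (k : ℕ), ∀ η ∈ R, (a x)^[k] η ∈ R := by
    intro k
    induction k with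
    | zero => exact fun η hη => hη
    | succ k ih =>
      intro η hη
      rw [Function.iterate_succ_apply']
      exact hmaps x hx _ (ih η hη)
  refine ⟨⟨fun η hη => hmaps x hx η hη, ?_, ?_⟩, ?_⟩
  · -- InjOn
    intro η1 h1 η2 h2 heq
    rw [hR] at h1 h2
    obtain ⟨n1, hn1, hf1⟩ := h1.2 x hx
    obtain ⟨n2, hn2, hf2⟩ := h2.2 x hx
    have hN1 : (a x)^[n1 * n2] η1 = η1 := by
      rw [Function.iterate_mul]
      exact Function.iterate_fixed hf1 n2
    have hN2 : (a x)^[n1 * n2] η2 = η2 := by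
      rw [Nat.mul_comm, Function.iterate_mul]
      exact Function.iterate_fixed hf2 n1
    obtain ⟨k, hk⟩ : ∃ k, n1 * n2 = k + 1 :=
      ⟨n1 * n2 - 1, by have := Nat.mul_le_mul hn1 hn2; omega⟩
    rw [hk] at hN1 hN2
    calc η1 = (a x)^[k + 1] η1 := hN1.symm
      _ = (a x)^[k] (a x η1) := Function.iterate_succ_apply _ _ _
      _ = (a x)^[k] (a x η2) := by rw [heq]
      _ = (a x)^[k + 1] η2 := (Function.iterate_succ_apply _ _ _).symm
      _ = η2 := hN2
  · -- SurjOn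
    intro η hη
    have hη' := hη
    rw [hR] at hη'
    obtain ⟨n, hn1, hf⟩ := hη'.2 x hx
    obtain ⟨k, hk⟩ : ∃ k, n = k + 1 := ⟨n - 1, by omega⟩
    refine ⟨(a x)^[k] η, hiter k η hη, ?_⟩
    have : (a x)^[k + 1] η = η := hk ▸ hf
    rw [← Function.iterate_succ_apply' (a x) k η]
    exact this
  · intro η hη
    exact commute_of_stable ha hx hy (hst η hη)
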